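/- Fix n ≥ 2 and t ∈ ℂ. The set a(t) of n×n matrices M with M_{i,n} = x_i, M_{i,j} = t·x_{i−j mod n} for 1 ≤ i,j ≤ n−1 with i ≠ j, M_{n,j} = t²·x_{n−j} for 1 ≤ j ≤ n−1, and zero diagonal (for arbitrary parameters x₁,...,x_{n-1} ∈ ℂ), is an abelian Lie subalgebra of sl_n(ℂ) of dimension n−1 (for the commutator bracket). -/

import Mathlib

def redCurve (m : ℕ) (t : ℂ) (z : Fin (m + 1) → ℂ) :
    Matrix (Fin (m + 1)) (Fin (m + 1)) ℂ :=
  Matrix.of fun i j =>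
    if i = j then 0
    else (if j = Fin.last m then 1 else if i = Fin.last m then t ^ 2 else t) * z (i - j)

namespace RedCurveAux

variable {m : ℕ} {t : ℂ}

/-- The scalar coefficient in `redCurve`. -/
def cf (m : ℕ) (t : ℂ) (i j : Fin (m + 1)) : ℂ :=
  if j = Fin.last m then 1 else if i = Fin.last m then t ^ 2 else t

lemma redCurve_apply (z : Fin (m + 1) → ℂ) (i j : Fin (m + 1)) :
    redCurve m t z i j = if i = j then 0 else cf m t i j * z (i - j) := rfl

/-- The product of two coefficients is independent of the middle index. -/
def cf2 (m : ℕ) (t : ℂ) (i j : Fin (m + 1)) : ℂ :=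
  if i = Fin.last m then (if j = Fin.last m then t ^ 2 else t ^ 3)
  else (if j = Fin.last m then t else t ^ 2)

lemma cf_mul_cf {i j k : Fin (m + 1)} (hki : k ≠ i) (hkj : k ≠ j) :
    cf m t i k * cf m t k j = cf2 m t i j := by
  unfold cf cf2
  by_cases hk : k = Fin.last m <;> by_cases hi : i = Fin.last m <;>
    by_cases hj : j = Fin.last m <;> simp_all <;> ring

lemma term_eq (z z' : Fin (m + 1) → ℂ) (i j k : Fin (m + 1)) :
    redCurve m t z i k * redCurve m t z' k j =
      if k = i ∨ k = j then 0 else cf2 m t i j * (z (i - k) * z' (k - j)) := by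
  rw [redCurve_apply, redCurve_apply]
  by_cases hki : k = i
  · simp [hki]
  by_cases hkj : k = j
  · simp [hkj]
  · simp only [if_neg (Ne.symm hki), if_neg hkj, if_neg (by tauto : ¬(k = i ∨ k = j))]
    rw [← cf_mul_cf hki hkj]; ring

lemma sub_eq_left_iff (i j k : Fin (m + 1)) : i + j - k = i ↔ k = j := by
  rw [sub_eq_iff_eq_add, add_right_inj, eq_comm]

lemma sub_eq_right_iff (i j k : Fin (m + 1)) : i + j - k = j ↔ k = i := by
  rw [sub_eq_iff_eq_add, add_comm i j, add_right_inj, eq_comm]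

/-- `redCurve m t` as a linear map. -/
noncomputable def L (m : ℕ) (t : ℂ) :
    (Fin (m + 1) → ℂ) →ₗ[ℂ] Matrix (Fin (m + 1)) (Fin (m + 1)) ℂ where
  toFun := redCurve m t
  map_add' z z' := by
    ext i j
    simp only [redCurve, Matrix.of_apply, Matrix.add_apply, Pi.add_apply]
    split <;> ring
  map_smul' a z := by
    ext i j
    simp only [redCurve, Matrix.of_apply, Matrix.smul_apply, Pi.smul_apply,
      smul_eq_mul, RingHom.id_apply]
    split <;> ring

lemma ker_L : LinearMap.ker (L m t) = Submodule.span ℂ {Pi.single (0 : Fin (m + 1)) (1 : ℂ)} := by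
  ext z
  rw [LinearMap.mem_ker, Submodule.mem_span_singleton]
  constructor
  · intro h
    refine ⟨z 0, funext fun k => ?_⟩
    by_cases hk : k = 0
    · simp [hk]
    · have hi : k + Fin.last m ≠ Fin.last m := by
        intro h'
        exact hk (by simpa using congrArg (· - Fin.last m) h')
      have h3 := congrFun (congrFun h (k + Fin.last m)) (Fin.last m)
      rw [show (L m t) z = redCurve m t z from rfl] at h3
      rw [redCurve_apply, if_neg hi, add_sub_cancel_right] at h3
      have hz : z k = 0 := by simpa [cf] using h3
      simp [Pi.single_apply, hk, hz]
  · rintro ⟨a, rfl⟩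
    ext i j
    rw [show (L m t) _ = redCurve m t _ from rfl, redCurve_apply]
    by_cases hij : i = j
    · simp [hij]
    · have : i - j ≠ 0 := sub_ne_zero.mpr hij
      simp [if_neg hij, Pi.single_apply, this]

theorem redCurve_abelian_subalgebra (m : ℕ) (hm : 1 ≤ m) (t : ℂ) :
    (∀ z : Fin (m + 1) → ℂ, Matrix.trace (redCurve m t z) = 0) ∧
    (∀ z z' : Fin (m + 1) → ℂ,
      redCurve m t z * redCurve m t z' = redCurve m t z' * redCurve m t z) ∧
    Module.finrank ℂ (Submodule.span ℂ (Set.range (redCurve m t))) = m := by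
  refine ⟨?_, ?_, ?_⟩
  · intro z
    simp [Matrix.trace, Matrix.diag, redCurve]
  · intro z z'
    ext i j
    rw [Matrix.mul_apply, Matrix.mul_apply]
    simp only [term_eq]
    refine (Fintype.sum_equiv (Equiv.subLeft (i + j)) _ _ fun k => ?_).symm
    simp only [Equiv.subLeft_apply]
    by_cases hk : k = i ∨ k = j
    · rw [if_pos hk, if_pos]
      rcases hk with h | h
      · exact Or.inr ((sub_eq_right_iff i j k).mpr h)
      · exact Or.inl ((sub_eq_left_iff i j k).mpr h)
    · push_neg at hk
      rw [if_neg (show ¬(i + j - k = i ∨ i + j - k = j) by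
            rw [sub_eq_left_iff, sub_eq_right_iff]; tauto),
        if_neg (by tauto : ¬(k = i ∨ k = j))]
      rw [show i - (i + j - k) = k - j by abel, show i + j - k - j = i - k by abel]
      ring
  · have hrange : Submodule.span ℂ (Set.range (redCurve m t)) = LinearMap.range (L m t) := by
      rw [show Set.range (redCurve m t) = ↑(LinearMap.range (L m t)) by
        simp [LinearMap.coe_range]; rfl]
      exact Submodule.span_eq _
    rw [hrange]
    have h1 := LinearMap.finrank_range_add_finrank_ker (L m t)
    rw [ker_L] at h1
    have hne : (Pi.single (0 : Fin (m + 1)) (1 : ℂ) : Fin (m + 1) → ℂ) ≠ 0 := by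
      intro h
      have := congrFun h (0 : Fin (m + 1))
      simp [Pi.single_apply] at this
    rw [finrank_span_singleton hne] at h1
    have h2 : Module.finrank ℂ (Fin (m + 1) → ℂ) = m + 1 := by simp
    omega

end RedCurveAux

theorem redCurve_abelian_subalgebra (m : ℕ) (hm : 1 ≤ m) (t : ℂ) :
    (∀ z : Fin (m + 1) → ℂ, Matrix.trace (redCurve m t z) = 0) ∧
    (∀ z z' : Fin (m + 1) → ℂ,
      redCurve m t z * redCurve m t z' = redCurve m t z' * redCurve m t z) ∧
    Module.finrank ℂ (Submodule.span ℂ (Set.range (redCurve m t))) = m :=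
  RedCurveAux.redCurve_abelian_subalgebra m hm t
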